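/- Let q_1, ..., q_r be multiplicatively independent nonzero integers. For every Y ≥ 1, the number of primes p for which the subgroup of (ℤ/pℤ)^× generated by the reductions of q_1, ..., q_r has at most Y elements is O(Y^{1+1/r}), where the implied constant may depend on q_1, ..., q_r. -/
import Mathlib

/-- Nonzero integers `q 0, ..., q (r-1)` are multiplicatively independent:
`q 0 ^ e 0 * ⋯ * q (r-1) ^ e (r-1) = 1` with integer exponents forces all `e i = 0`. -/
def MultIndep {r : ℕ} (q : Fin r → ℤ) : Prop :=
  ∀ e : Fin r → ℤ, (∏ i, (q i : ℚ) ^ (e i)) = 1 → e = 0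

/-- The subgroup of `(ℤ/pℤ)ˣ` generated by the reductions of the `q i`. -/
def genSubgroup {r : ℕ} (q : Fin r → ℤ) (p : ℕ) : Subgroup (ZMod p)ˣ :=
  Subgroup.closure {x : (ZMod p)ˣ | ∃ i, (x : ZMod p) = ((q i : ℤ) : ZMod p)}

theorem stmt1 {r : ℕ} (hr : 0 < r) (q : Fin r → ℤ) (hq : ∀ i, q i ≠ 0)
    (hind : MultIndep q) :
    ∃ C : ℝ, 0 < C ∧ ∀ Y : ℝ, 1 ≤ Y →
      {p : ℕ | p.Prime ∧ ¬ (p : ℤ) ∣ (∏ i, q i) ∧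
        (Nat.card (genSubgroup q p) : ℝ) ≤ Y}.Finite ∧
      (Nat.card {p : ℕ | p.Prime ∧ ¬ (p : ℤ) ∣ (∏ i, q i) ∧
        (Nat.card (genSubgroup q p) : ℝ) ≤ Y} : ℝ) ≤ C * Y ^ (1 + (r : ℝ)⁻¹) := by
  classical
  set B : ℕ := ∏ i, (q i).natAbs with hB
  have hB1 : 1 ≤ B := Finset.one_le_prod' fun i _ => Int.natAbs_pos.mpr (hq i)
  set L : ℕ := Nat.clog 2 B with hL
  have hBL : B ≤ 2 ^ L := Nat.le_pow_clog one_lt_two B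
  refine ⟨(3 : ℝ) ^ r * (1 + L), by positivity, fun Y hY => ?_⟩
  have hY0 : (0 : ℝ) < Y := lt_of_lt_of_le one_pos hY
  set x : ℝ := Y ^ ((r : ℝ)⁻¹) with hxdef
  have hx1 : 1 ≤ x := by
    have := Real.rpow_le_rpow (by norm_num) hY (by positivity : (0:ℝ) ≤ (r:ℝ)⁻¹)
    simpa [Real.one_rpow] using this
  have hx0 : 0 ≤ x := le_trans zero_le_one hx1
  set N : ℕ := ⌊x⌋₊ with hNdef
  have hN1 : 1 ≤ N := Nat.le_floor (by simpa using hx1)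
  have hNx : (N : ℝ) ≤ x := Nat.floor_le hx0
  have hxN : x < N + 1 := Nat.lt_floor_add_one x
  have hxr : x ^ r = Y := by
    rw [hxdef, ← Real.rpow_natCast (Y ^ ((r:ℝ)⁻¹)) r, ← Real.rpow_mul (le_of_lt hY0),
      inv_mul_cancel₀ (by exact_mod_cast hr.ne'), Real.rpow_one]
  have hYN : Y < ((N : ℝ) + 1) ^ r := by
    rw [← hxr]
    exact pow_lt_pow_left₀ hxN hx0 hr.ne'
  -- the finite index set of exponent vectors
  set S : Finset (Fin r → ℤ) :=
    (Finset.Icc (fun _ => -(N : ℤ)) (fun _ => (N : ℤ))).erase 0 with hS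
  set D : (Fin r → ℤ) → ℤ :=
    fun c => ∏ i, q i ^ (c i).toNat - ∏ i, q i ^ (-(c i)).toNat with hD
  have hD0 : ∀ c : Fin r → ℤ, c ≠ 0 → D c ≠ 0 := by
    intro c hc h0
    apply hc
    apply hind
    have hprod : (∏ i, q i ^ (c i).toNat) = ∏ i, q i ^ (-(c i)).toNat := by
      have := sub_eq_zero.mp h0
      simpa [hD] using this
    have hQ : (∏ i, ((q i : ℚ)) ^ ((c i).toNat)) = ∏ i, ((q i : ℚ)) ^ ((-(c i)).toNat) := by
      exact_mod_cast congrArg (fun z : ℤ => (z : ℚ)) hprod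
    have hne : ∀ i, ((q i : ℚ)) ≠ 0 := fun i => Int.cast_ne_zero.mpr (hq i)
    have key : ∀ i, (q i : ℚ) ^ (c i) =
        (q i : ℚ) ^ ((c i).toNat) / (q i : ℚ) ^ ((-(c i)).toNat) := by
      intro i
      rw [eq_div_iff (pow_ne_zero _ (hne i)), ← zpow_natCast ((q i : ℚ)) ((-(c i)).toNat),
        ← zpow_natCast ((q i : ℚ)) ((c i).toNat), ← zpow_add₀ (hne i)]
      congr 1
      omega
    rw [Finset.prod_congr rfl fun i _ => key i, Finset.prod_div_distrib, hQ,
      div_self (Finset.prod_ne_zero_iff.mpr fun i _ => pow_ne_zero _ (hne i))]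
  set M : ℕ := ∏ c ∈ S, (D c).natAbs with hM
  have hM0 : M ≠ 0 := by
    rw [hM]
    exact Finset.prod_ne_zero_iff.mpr fun c hc =>
      Int.natAbs_ne_zero.mpr (hD0 c (Finset.ne_of_mem_erase hc))
  -- key divisibility
  have hkey : ∀ p : ℕ, p.Prime → ¬ (p : ℤ) ∣ (∏ i, q i) →
      (Nat.card (genSubgroup q p) : ℝ) ≤ Y → p ∣ M := by
    intro p hp hpq hcard
    haveI : Fact p.Prime := ⟨hp⟩
    have hpqi : ∀ i, ¬ (p : ℤ) ∣ q i := fun i hdvd =>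
      hpq (hdvd.trans (Finset.dvd_prod_of_mem q (Finset.mem_univ i)))
    have hu : ∀ i, IsUnit (((q i : ℤ) : ZMod p)) := by
      intro i
      rw [isUnit_iff_ne_zero, Ne, ZMod.intCast_zmod_eq_zero_iff_dvd]
      exact hpqi i
    set u : Fin r → (ZMod p)ˣ := fun i => (hu i).unit with hudef
    have humem : ∀ i, u i ∈ genSubgroup q p := fun i =>
      Subgroup.subset_closure ⟨i, (hu i).unit_spec⟩
    haveI : Fintype (genSubgroup q p) := Fintype.ofFinite _
    set F : (Fin r → Fin (N + 1)) → (genSubgroup q p) :=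
      fun e => ⟨∏ i, (u i) ^ ((e i : ℕ)),
        Subgroup.prod_mem _ fun i _ => Subgroup.pow_mem _ (humem i) _⟩ with hF
    have hlt : Fintype.card (genSubgroup q p) < Fintype.card (Fin r → Fin (N + 1)) := by
      have h1 : (Fintype.card (genSubgroup q p) : ℝ) ≤ Y := by
        rwa [← Nat.card_eq_fintype_card]
      have h2 : ((Fintype.card (genSubgroup q p)) : ℝ) < ((N + 1) ^ r : ℕ) := by
        push_cast
        exact lt_of_le_of_lt h1 hYN
      have := Nat.cast_lt (α := ℝ).mp h2
      simpa [Fintype.card_fun] using this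
    obtain ⟨e, f, hef, hFeq⟩ := Fintype.exists_ne_map_eq_of_card_lt F hlt
    -- equality in ZMod p
    have hzm : ((∏ i, q i ^ (e i : ℕ) : ℤ) : ZMod p) = ((∏ i, q i ^ (f i : ℕ) : ℤ) : ZMod p) := by
      have h1 : (∏ i, (u i) ^ ((e i : ℕ))) = (∏ i, (u i) ^ ((f i : ℕ))) :=
        congrArg Subtype.val hFeq
      have h2 := congrArg (Units.val) h1
      push_cast
      have hval : ∀ (g : Fin r → Fin (N+1)), (Units.val (∏ i, (u i) ^ ((g i : ℕ)))) =
          ∏ i, (((q i : ℤ) : ZMod p)) ^ ((g i : ℕ)) := by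
        intro g
        rw [show (Units.val (∏ i, (u i) ^ ((g i : ℕ)))) =
            ∏ i, Units.val ((u i) ^ ((g i : ℕ))) from map_prod (Units.coeHom (ZMod p)) _ _]
        exact Finset.prod_congr rfl fun i _ => by rw [Units.val_pow_eq_pow_val, (hu i).unit_spec]
      rw [hval e, hval f] at h2
      exact_mod_cast h2
    have hdvd : (p : ℤ) ∣ (∏ i, q i ^ (e i : ℕ)) - (∏ i, q i ^ (f i : ℕ)) := by
      exact Int.ModEq.dvd ((ZMod.intCast_eq_intCast_iff _ _ _).mp hzm).symm
    set c : Fin r → ℤ := fun i => ((e i : ℕ) : ℤ) - ((f i : ℕ) : ℤ) with hc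
    have hcS : c ∈ S := by
      rw [hS, Finset.mem_erase]
      constructor
      · obtain ⟨i, hi⟩ := Function.ne_iff.mp hef
        intro h0
        have : c i = 0 := by rw [h0]; rfl
        simp only [hc] at this
        exact hi (Fin.ext (by omega))
      · rw [Finset.mem_Icc]
        constructor <;> (rw [Pi.le_def]; intro i) <;>
          · have h1 : (e i : ℕ) ≤ N := Nat.lt_succ_iff.mp (e i).isLt
            have h2 : (f i : ℕ) ≤ N := Nat.lt_succ_iff.mp (f i).isLt
            simp only [hc]
            omega
    -- factorization
    have hfac : (∏ i, q i ^ (e i : ℕ)) - (∏ i, q i ^ (f i : ℕ)) =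
        (∏ i, q i ^ (min (e i : ℕ) (f i : ℕ))) * D c := by
      rw [hD, mul_sub]
      congr 1 <;> rw [← Finset.prod_mul_distrib] <;>
        refine Finset.prod_congr rfl fun i _ => ?_ <;> rw [← pow_add] <;> congr 1 <;>
        · simp only [hc]; omega
    have hpDc : (p : ℤ) ∣ D c := by
      rw [hfac] at hdvd
      have hpint : Prime (p : ℤ) := Nat.prime_iff_prime_int.mp hp
      rcases (hpint.dvd_mul.mp hdvd) with h | h
      · exfalso
        obtain ⟨i, _, hi⟩ := hpint.exists_mem_finset_dvd h
        exact hpqi i (hpint.dvd_of_dvd_pow hi)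
      · exact h
    have : p ∣ (D c).natAbs := by
      have := Int.natAbs_dvd_natAbs.mpr hpDc
      simpa using this
    exact this.trans (Finset.dvd_prod_of_mem _ hcS)
  -- the set of bad primes
  set P : Set ℕ := {p : ℕ | p.Prime ∧ ¬ (p : ℤ) ∣ (∏ i, q i) ∧
      (Nat.card (genSubgroup q p) : ℝ) ≤ Y} with hP
  have hsub : P ⊆ ↑M.primeFactors := by
    intro p hp
    exact Nat.mem_primeFactors.mpr ⟨hp.1, hkey p hp.1 hp.2.1 hp.2.2, hM0⟩
  have hfin : P.Finite := Set.Finite.subset (Finset.finite_toSet _) hsub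
  refine ⟨hfin, ?_⟩
  -- cardinality chain
  have hcard1 : Nat.card P ≤ M.primeFactors.card := by
    rw [Nat.card_coe_set_eq]
    calc P.ncard ≤ (↑M.primeFactors : Set ℕ).ncard :=
          Set.ncard_le_ncard hsub (Finset.finite_toSet _)
      _ = M.primeFactors.card := Set.ncard_coe_finset _
  set k : ℕ := M.primeFactors.card with hk
  have h2k : 2 ^ k ≤ M := by
    calc 2 ^ k ≤ ∏ p ∈ M.primeFactors, p :=
          Finset.pow_card_le_prod _ _ _ fun p hp => (Nat.prime_of_mem_primeFactors hp).two_le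
      _ ≤ M := Nat.le_of_dvd (Nat.pos_of_ne_zero hM0) (Nat.prod_primeFactors_dvd M)
  set K : ℕ := S.card with hK
  have hDbound : ∀ c ∈ S, (D c).natAbs ≤ 2 ^ (1 + L * N) := by
    intro c hcS
    have hmem := Finset.mem_of_mem_erase (hS ▸ hcS)
    rw [Finset.mem_Icc] at hmem
    have hle : ∀ (a : Fin r → ℕ), (∀ i, a i ≤ N) → (∏ i, q i ^ (a i)).natAbs ≤ B ^ N := by
      intro a ha
      calc (∏ i, q i ^ (a i)).natAbs = ∏ i, (q i ^ (a i)).natAbs :=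
            map_prod Int.natAbsHom _ _
        _ = ∏ i, (q i).natAbs ^ (a i) :=
            Finset.prod_congr rfl fun i _ => Int.natAbs_pow _ _
        _ ≤ ∏ i, (q i).natAbs ^ N := Finset.prod_le_prod' fun i _ =>
            Nat.pow_le_pow_right (Int.natAbs_pos.mpr (hq i)) (ha i)
        _ = B ^ N := by rw [hB, ← Finset.prod_pow]
    rw [Pi.le_def, Pi.le_def] at hmem
    have h1 : ∀ i, (c i).toNat ≤ N := fun i => by have := hmem.2 i; have := hmem.1 i; omega
    have h2 : ∀ i, (-(c i)).toNat ≤ N := fun i => by have := hmem.2 i; have := hmem.1 i; omega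
    calc (D c).natAbs ≤ (∏ i, q i ^ (c i).toNat).natAbs + (∏ i, q i ^ (-(c i)).toNat).natAbs :=
          Int.natAbs_sub_le _ _
      _ ≤ B ^ N + B ^ N := Nat.add_le_add (hle _ h1) (hle _ h2)
      _ = 2 * B ^ N := by ring
      _ ≤ 2 * (2 ^ L) ^ N := by
          have := Nat.pow_le_pow_left hBL N
          omega
      _ = 2 ^ (1 + L * N) := by rw [pow_add, pow_one, ← pow_mul]
  have hMbound : M ≤ 2 ^ ((1 + L * N) * K) := by
    calc M ≤ ∏ _c ∈ S, 2 ^ (1 + L * N) := Finset.prod_le_prod' hDbound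
      _ = (2 ^ (1 + L * N)) ^ K := by rw [Finset.prod_const, hK]
      _ = 2 ^ ((1 + L * N) * K) := by rw [← pow_mul]
  have hkbound : k ≤ (1 + L * N) * K := by
    have := le_trans h2k hMbound
    exact (Nat.pow_le_pow_iff_right one_lt_two).mp this
  have hKbound : K ≤ (2 * N + 1) ^ r := by
    rw [hK, hS]
    calc ((Finset.Icc (fun _ => -(N : ℤ)) (fun _ => (N : ℤ))).erase 0).card
        ≤ (Finset.Icc (fun _ => -(N : ℤ)) (fun _ => (N : ℤ))).card := Finset.card_erase_le
      _ = ∏ _i : Fin r, (2 * N + 1) := by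
          rw [Pi.card_Icc]
          refine Finset.prod_congr rfl fun i _ => ?_
          rw [Int.card_Icc]
          omega
      _ = (2 * N + 1) ^ r := by rw [Finset.prod_const]; simp
  -- final real estimate
  have hfinal : (Nat.card P : ℝ) ≤ ((1 + L * N) * ((2 * N + 1) ^ r) : ℕ) := by
    have : Nat.card P ≤ (1 + L * N) * (2 * N + 1) ^ r :=
      le_trans hcard1 (le_trans hkbound (Nat.mul_le_mul_left _ hKbound))
    exact_mod_cast this
  refine le_trans hfinal ?_
  push_cast
  have e1 : (1 : ℝ) + L * N ≤ (1 + L) * x := by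
    have hLN : (L : ℝ) * N ≤ L * x := by
      apply mul_le_mul_of_nonneg_left hNx (by positivity)
    nlinarith
  have e2 : (2 * (N : ℝ) + 1) ≤ 3 * x := by nlinarith
  have e3 : ((2 * (N : ℝ) + 1)) ^ r ≤ (3 * x) ^ r := by
    apply pow_le_pow_left₀ (by positivity) e2
  have e4 : ((3 : ℝ) * x) ^ r = 3 ^ r * Y := by rw [mul_pow, hxr]
  have hyx : Y ^ (1 + (r : ℝ)⁻¹) = Y * x := by
    rw [Real.rpow_add hY0, Real.rpow_one]
  rw [hyx]
  calc (1 + (L : ℝ) * N) * (2 * N + 1) ^ r ≤ ((1 + L) * x) * (3 ^ r * Y) := by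
        apply mul_le_mul e1 (by rw [← e4]; exact e3) (by positivity) (by positivity)
    _ = 3 ^ r * (1 + L) * (Y * x) := by ring
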